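/- For every m ≥ 0, ε > 0, and every (x, t) ∈ εℤ² with t > 0, the following two identities hold: (x+ε)((x−ε)² − t²)·ã₁(x−2ε, t, m, ε) + (x−ε)((x+ε)² − t²)·ã₁(x+2ε, t, m, ε) = 2x((1+2m²ε²)(x²−ε²) − t²)·ã₁(x, t, m, ε), and (x+ε)((x−ε)² − (t+ε)²)·ã₂(x−2ε, t, m, ε) + (x−ε)((x+ε)² − (t−ε)²)·ã₂(x+2ε, t, m, ε) = 2x((1+2m²ε²)(x²−ε²) − t² + ε²)·ã₂(x, t, m, ε). -/

import Mathlib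

open Complex Real Filter Asymptotics

noncomputable section

/-- Number of turns of the checker path with `T` moves whose set of indices of
rightward moves (among moves `0, …, T-1`) is `R`. -/
def turnsOf (T : ℕ) (R : Finset ℕ) : ℕ :=
  ((Finset.Ico 1 T).filter fun i => ¬((i ∈ R) ↔ (i - 1 ∈ R))).card

/-- The Feynman-checkers wave function on the integer lattice, with `μ = m·ε`:
`waveA X T μ = a(X·ε, T·ε, m, ε)`.  A checker path from `(0,0)` to `(X·ε, T·ε)`
consists of `T` moves, each `(ε,ε)` ("right") or `(-ε,ε)` ("left"); it is
determined by the set `R ⊆ {0,…,T-1}` of indices of its rightward moves.  The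
path ends at `X·ε` iff `R.card - (T - R.card) = X`, and its second point is
`(ε,ε)` iff `0 ∈ R`. -/
def waveA (X : ℤ) (T : ℕ) (μ : ℝ) : ℂ :=
  (((1 + μ ^ 2) ^ ((1 - (T : ℝ)) / 2) : ℝ) : ℂ) * Complex.I *
    ∑ R ∈ (Finset.range T).powerset,
      if 0 ∈ R ∧ 2 * (R.card : ℤ) - (T : ℤ) = X then
        (-Complex.I * (μ : ℂ)) ^ turnsOf T R
      else 0

/-- The wave function `a(x, t, m, ε)` for lattice points `(x,t) ∈ εℤ²`. -/
def wf (x t m ε : ℝ) : ℂ := waveA ⌊x / ε⌋ ⌊t / ε⌋.toNat (m * ε)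

/-- `ã₁(x, t, m, ε) = Re a(x, t+ε, m, ε)`. -/
def a1 (x t m ε : ℝ) : ℝ := (wf x (t + ε) m ε).re

/-- `ã₂(x, t, m, ε) = Im a(x+ε, t+ε, m, ε)`. -/
def a2 (x t m ε : ℝ) : ℝ := (wf (x + ε) (t + ε) m ε).im

end


namespace FeynCheck

/-- number of compositions of `q` into `r` positive parts -/
def comp : ℕ → ℕ → ℕ
  | q, 0 => if q = 0 then 1 else 0
  | 0, _+1 => 0
  | q+1, r+1 => Nat.choose q r

@[simp] lemma comp_zero_left (r : ℕ) : comp 0 (r+1) = 0 := rfl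

lemma comp_zero (q : ℕ) : comp q 0 = if q = 0 then 1 else 0 := by
  cases q <;> rfl

lemma comp_succ_succ (q r : ℕ) : comp (q+1) (r+1) = Nat.choose q r := rfl

lemma comp_eq_zero_of_lt {q r : ℕ} (h : q < r) : comp q r = 0 := by
  match q, r with
  | q, 0 => omega
  | 0, r+1 => rfl
  | q+1, r+1 =>
    rw [comp_succ_succ]
    exact Nat.choose_eq_zero_of_lt (by omega)

lemma comp_pascal (q r : ℕ) : comp (q+1) (r+1) = comp q (r+1) + comp q r := by
  match q, r with
  | 0, 0 => rfl
  | 0, r+1 => simp [comp_succ_succ, comp, Nat.choose_eq_zero_of_lt]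
  | q+1, 0 => simp [comp_succ_succ, comp]
  | q+1, r+1 => simp only [comp_succ_succ, Nat.choose_succ_succ, Nat.succ_eq_add_one]; ring

@[simp] lemma comp_self (q : ℕ) : comp q q = 1 := by
  match q with
  | 0 => rfl
  | q+1 => rw [comp_succ_succ]; exact Nat.choose_self q

lemma comp_cast (b k : ℕ) :
    ((comp (b+1) (k+1) : ℕ) : ℝ) = (b.descFactorial k : ℝ) / (k.factorial : ℝ) := by
  rw [comp_succ_succ, eq_div_iff (by exact_mod_cast k.factorial_ne_zero)]
  rw [Nat.descFactorial_eq_factorial_mul_choose]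
  push_cast; ring

lemma comp_cast' (a r : ℕ) :
    ((comp a (r+2) : ℕ) : ℝ) = ((a-1).descFactorial (r+1) : ℝ) / ((r+1).factorial : ℝ) := by
  match a with
  | 0 =>
    simp [Nat.descFactorial_eq_zero_iff_lt.2 (by omega : 0 < r+1)]
  | a+1 => simpa using comp_cast a (r+1)

/-- `(s'+1) * dF(r+s'+1, r) = (r+s'+1) * dF(r+s', r)` -/
lemma L0 (r s' : ℕ) : (s'+1) * Nat.descFactorial (r+s'+1) r = (r+s'+1) * Nat.descFactorial (r+s') r := by
  induction r with
  | zero => simp [Nat.descFactorial]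
  | succ r ih =>
    have h1 : Nat.descFactorial (r+1+s'+1) (r+1) = (r+s'+2) * Nat.descFactorial (r+s'+1) r := by
      have : r+1+s'+1 = (r+s'+1)+1 := by ring
      rw [this, Nat.succ_descFactorial_succ]
    have h2 : Nat.descFactorial (r+1+s') (r+1) = (r+s'+1) * Nat.descFactorial (r+s') r := by
      have : r+1+s' = (r+s')+1 := by ring
      rw [this, Nat.succ_descFactorial_succ]
    rw [h1, h2]
    calc (s'+1) * ((r+s'+2) * Nat.descFactorial (r+s'+1) r)
        = (r+s'+2) * ((s'+1) * Nat.descFactorial (r+s'+1) r) := by ring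
      _ = (r+s'+2) * ((r+s'+1) * Nat.descFactorial (r+s') r) := by rw [ih]
      _ = (r+1+s'+1) * ((r+s'+1) * Nat.descFactorial (r+s') r) := by ring_nf
      _ = _ := by ring

/-- `(r+s) * dF(r+s-1, r+1) = (s-1) * s * dF(r+s, r)` (truncated subtraction). -/
lemma L1 (r s : ℕ) : (r+s) * Nat.descFactorial (r+s-1) (r+1) = (s-1) * s * Nat.descFactorial (r+s) r := by
  match s with
  | 0 => simp [Nat.descFactorial_eq_zero_iff_lt.2 (by omega : r - 1 < r + 1)]
  | s'+1 =>
    have h : r + (s'+1) - 1 = r + s' := by omega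
    rw [h]
    have h2 : Nat.descFactorial (r+s') (r+1) = s' * Nat.descFactorial (r+s') r := by
      rw [Nat.descFactorial_succ]
      congr 1
      omega
    rw [h2]
    have := L0 r s'
    calc (r+(s'+1)) * (s' * Nat.descFactorial (r+s') r)
        = s' * ((r+s'+1) * Nat.descFactorial (r+s') r) := by ring
      _ = s' * ((s'+1) * Nat.descFactorial (r+s'+1) r) := by rw [← L0 r s']
      _ = (s'+1-1) * (s'+1) * Nat.descFactorial (r+(s'+1)) r := by
            have h3 : r + (s'+1) = r + s' + 1 := by ring
            have h4 : s' + 1 - 1 = s' := by omega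
            rw [h3, h4]; ring

end FeynCheck

section Stage2
namespace FeynCheck

noncomputable def cc (p k : ℕ) : ℝ := comp p k

@[simp] lemma cc_zero_left (r : ℕ) : cc 0 (r+1) = 0 := by simp [cc]

lemma cc_cast (b k : ℕ) : cc (b+1) (k+1) = (b.descFactorial k : ℝ) / (k.factorial : ℝ) := by
  simpa [cc] using comp_cast b k

lemma cc_cast' (a r : ℕ) : cc a (r+2) = ((a-1).descFactorial (r+1) : ℝ) / ((r+1).factorial : ℝ) := by
  simpa [cc] using comp_cast' a r

lemma cc_one (n : ℕ) : cc n 1 = if n = 0 then 0 else 1 := by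
  match n with
  | 0 => simp [cc]
  | n+1 => simp [cc, comp_succ_succ]

lemma cc_zero_right (n : ℕ) : cc n 0 = if n = 0 then 1 else 0 := by
  match n with
  | 0 => simp [cc, comp]
  | n+1 => simp [cc, comp]

lemma cc_one_succ (n : ℕ) : cc (n+1) 1 = 1 := by rw [cc_one]; norm_num

lemma cc_zero_succ (n : ℕ) : cc (n+1) 0 = 0 := by rw [cc_zero_right]; norm_num

lemma fac_succ_cast (r : ℕ) : ((r+1).factorial : ℝ) = ((r:ℝ)+1) * (r.factorial : ℝ) := by
  rw [Nat.factorial_succ]; push_cast; ring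

lemma fac_ne (r : ℕ) : (r.factorial : ℝ) ≠ 0 := by exact_mod_cast r.factorial_ne_zero

/-- coefficient-level identity for the `a₁` (K) recurrence, index `0`. -/
lemma EK0 (p q : ℕ) :
    (q:ℝ)*((p:ℝ)-(q:ℝ)+1)*((p:ℝ)-1) * (cc (p-1) 1 * cc (q+1) 1)
      + (p:ℝ)*((p:ℝ)-(q:ℝ)-1)*((q:ℝ)-1) * (cc (p+1) 1 * cc (q-1) 1)
    = ((p:ℝ)-(q:ℝ))*(2*(p:ℝ)*(q:ℝ)-(p:ℝ)-(q:ℝ)+1) * (cc p 1 * cc q 1) := by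
  match p, q with
  | 0, q => simp only [cc_one]; norm_num
  | p+1, 0 => simp only [cc_one]; norm_num
  | 1, 1 => simp only [cc_one]; norm_num
  | 1, q+2 => simp only [cc_one]; norm_num; push_cast; ring
  | p+2, 1 => simp only [cc_one]; norm_num; push_cast; ring
  | p+2, q+2 => simp only [cc_one]; norm_num; push_cast; ring

/-- coefficient-level identity for the `a₁` (K) recurrence, successor indices. -/
lemma EKS (p q r : ℕ) :
    (q:ℝ)*((p:ℝ)-(q:ℝ)+1)*((p:ℝ)-1) * (cc (p-1) (r+2) * cc (q+1) (r+2))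
      + (p:ℝ)*((p:ℝ)-(q:ℝ)-1)*((q:ℝ)-1) * (cc (p+1) (r+2) * cc (q-1) (r+2))
    = ((p:ℝ)-(q:ℝ))*(2*(p:ℝ)*(q:ℝ)-(p:ℝ)-(q:ℝ)+1) * (cc p (r+2) * cc q (r+2))
      + ((p:ℝ)-(q:ℝ))*(((p:ℝ)-(q:ℝ))^2-1) * (cc p (r+1) * cc q (r+1)) := by
  match p, q with
  | 0, q =>
    simp only [show (0:ℕ)-1 = 0 from rfl, cc_zero_left]
    push_cast; ring
  | p+1, 0 =>
    simp only [show (0:ℕ)-1 = 0 from rfl, cc_zero_left]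
    have h1 : cc 1 (r+2) = 0 := by
      rw [cc_cast 0 (r+1), Nat.descFactorial_of_lt (by omega)]; simp
    rw [h1]
    push_cast; ring
  | a+1, b+1 =>
    rw [show (a+1:ℕ)-1 = a from rfl, show (b+1:ℕ)-1 = b from rfl]
    rw [cc_cast' a r, cc_cast (b+1) (r+1), cc_cast (a+1) (r+1), cc_cast' b r,
        cc_cast a (r+1), cc_cast b (r+1), cc_cast a r, cc_cast b r]
    rcases Nat.lt_or_ge a r with ha | ha
    · rw [Nat.descFactorial_of_lt (show a-1 < r+1 by omega),
          Nat.descFactorial_of_lt (show a+1 < r+1 by omega),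
          Nat.descFactorial_of_lt (show a < r+1 by omega),
          Nat.descFactorial_of_lt (show a < r by omega)]
      push_cast; ring
    · obtain ⟨s, rfl⟩ : ∃ s, a = r + s := ⟨a - r, by omega⟩
      rcases Nat.lt_or_ge b r with hb | hb
      · rw [Nat.descFactorial_of_lt (show b-1 < r+1 by omega),
            Nat.descFactorial_of_lt (show b+1 < r+1 by omega),
            Nat.descFactorial_of_lt (show b < r+1 by omega),
            Nat.descFactorial_of_lt (show b < r by omega)]
        push_cast; ring
      · obtain ⟨t, rfl⟩ : ∃ t, b = r + t := ⟨b - r, by omega⟩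
        have e2 : (((r+s).descFactorial (r+1) : ℕ) : ℝ) = (s:ℝ) * ((r+s).descFactorial r : ℝ) := by
          rw [Nat.descFactorial_succ, show r+s-r = s by omega]; push_cast; ring
        have e3 : (((r+s+1).descFactorial (r+1) : ℕ) : ℝ)
            = ((r:ℝ)+(s:ℝ)+1) * ((r+s).descFactorial r : ℝ) := by
          rw [Nat.succ_descFactorial_succ]; push_cast; ring
        have e2' : (((r+t).descFactorial (r+1) : ℕ) : ℝ) = (t:ℝ) * ((r+t).descFactorial r : ℝ) := by
          rw [Nat.descFactorial_succ, show r+t-r = t by omega]; push_cast; ring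
        have e3' : (((r+t+1).descFactorial (r+1) : ℕ) : ℝ)
            = ((r:ℝ)+(t:ℝ)+1) * ((r+t).descFactorial r : ℝ) := by
          rw [Nat.succ_descFactorial_succ]; push_cast; ring
        have e1 : ((r:ℝ)+(s:ℝ)) * (((r+s-1).descFactorial (r+1) : ℕ) : ℝ)
            = ((s:ℝ)-1) * (s:ℝ) * ((r+s).descFactorial r : ℝ) := by
          have h2 := congrArg (fun n : ℕ => (n : ℝ)) (L1 r s)
          match s with
          | 0 => push_cast at h2 ⊢
                 rw [show (((r+0-1).descFactorial (r+1) : ℕ) : ℝ) = 0 by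
                   rw [Nat.descFactorial_of_lt (by omega)]; simp]
                 ring
          | s+1 => push_cast [Nat.succ_sub_one] at h2 ⊢; linarith [h2]
        have e1' : ((r:ℝ)+(t:ℝ)) * (((r+t-1).descFactorial (r+1) : ℕ) : ℝ)
            = ((t:ℝ)-1) * (t:ℝ) * ((r+t).descFactorial r : ℝ) := by
          have h2 := congrArg (fun n : ℕ => (n : ℝ)) (L1 r t)
          match t with
          | 0 => push_cast at h2 ⊢
                 rw [show (((r+0-1).descFactorial (r+1) : ℕ) : ℝ) = 0 by
                   rw [Nat.descFactorial_of_lt (by omega)]; simp]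
                 ring
          | t+1 => push_cast [Nat.succ_sub_one] at h2 ⊢; linarith [h2]
        by_cases hrs : r + s = 0
        · obtain ⟨hr, hs⟩ : r = 0 ∧ s = 0 := by omega
          subst hr; subst hs
          simp only [Nat.zero_add] at *
          simp only [Nat.zero_sub, Nat.descFactorial_one, Nat.descFactorial_zero,
            Nat.descFactorial_self, Nat.factorial_one, Nat.factorial_zero] at *
          rcases t with _|t
          · norm_num
          · push_cast [Nat.succ_sub_one]; ring
        · by_cases hrt : r + t = 0
          · obtain ⟨hr, ht⟩ : r = 0 ∧ t = 0 := by omega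
            subst hr; subst ht
            simp only [Nat.zero_add, Nat.add_zero] at *
            simp only [Nat.zero_sub, Nat.descFactorial_one, Nat.descFactorial_zero,
              Nat.descFactorial_self, Nat.factorial_one, Nat.factorial_zero] at *
            rcases s with _|s
            · omega
            · push_cast [Nat.succ_sub_one]; ring
          · have hrs' : ((r:ℝ)+(s:ℝ)) ≠ 0 := by
              have : (0:ℝ) < (r:ℝ)+(s:ℝ) := by exact_mod_cast Nat.pos_of_ne_zero hrs
              linarith
            have hrt' : ((r:ℝ)+(t:ℝ)) ≠ 0 := by
              have : (0:ℝ) < (r:ℝ)+(t:ℝ) := by exact_mod_cast Nat.pos_of_ne_zero hrt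
              linarith
            have f1 : (((r+s-1).descFactorial (r+1) : ℕ) : ℝ)
                = ((s:ℝ)-1) * (s:ℝ) * ((r+s).descFactorial r : ℝ) / ((r:ℝ)+(s:ℝ)) := by
              rw [eq_div_iff hrs']; linarith [e1]
            have f1' : (((r+t-1).descFactorial (r+1) : ℕ) : ℝ)
                = ((t:ℝ)-1) * (t:ℝ) * ((r+t).descFactorial r : ℝ) / ((r:ℝ)+(t:ℝ)) := by
              rw [eq_div_iff hrt']; linarith [e1']
            rw [f1, f1', e2, e3, e2', e3', fac_succ_cast r]
            have hU := fac_ne r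
            push_cast
            field_simp
            ring

end FeynCheck
end Stage2

section Stage3
namespace FeynCheck

/-- coefficient-level identity for the `a₂` (J) recurrence, index `0`.  Here `q = b+1`. -/
lemma EJ0 (p b : ℕ) :
    ((p:ℝ)-((b:ℝ)+1))*(((b:ℝ)+1)+1)*((p:ℝ)-1) * (cc (p-1) 1 * cc (b+2) 0)
      + ((p:ℝ)-((b:ℝ)+1)-2)*(((b:ℝ)+1)-1)*((p:ℝ)-1) * (cc (p+1) 1 * cc b 0)
    = 2*((b:ℝ)+1)*((p:ℝ)-1)*((p:ℝ)-((b:ℝ)+1)-1) * (cc p 1 * cc (b+1) 0) := by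
  rw [cc_zero_right, cc_zero_right, cc_zero_right]
  norm_num
  rcases b with _|b
  · norm_num
  · norm_num

/-- coefficient-level identity for the `a₂` (J) recurrence, successor indices.  `q = b+1`. -/
lemma EJS (p b r : ℕ) :
    ((p:ℝ)-((b:ℝ)+1))*(((b:ℝ)+1)+1)*((p:ℝ)-1) * (cc (p-1) (r+2) * cc (b+2) (r+1))
      + ((p:ℝ)-((b:ℝ)+1)-2)*(((b:ℝ)+1)-1)*((p:ℝ)-1) * (cc (p+1) (r+2) * cc b (r+1))
    = 2*((b:ℝ)+1)*((p:ℝ)-1)*((p:ℝ)-((b:ℝ)+1)-1) * (cc p (r+2) * cc (b+1) (r+1))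
      + ((p:ℝ)-((b:ℝ)+1)-1)*((p:ℝ)-((b:ℝ)+1))*((p:ℝ)-((b:ℝ)+1)-2) * (cc p (r+1) * cc (b+1) r)
    := by
  match p with
  | 0 =>
    simp only [show (0:ℕ)-1 = 0 from rfl, cc_zero_left]
    have h1 : cc 1 (r+2) = 0 := by
      rw [cc_cast 0 (r+1), Nat.descFactorial_of_lt (by omega)]; simp
    rw [h1]
    push_cast; ring
  | a+1 =>
    rw [show (a+1:ℕ)-1 = a from rfl]
    match r, b with
    | 0, 0 =>
      -- q = 1, r = 0
      have h2 : cc 1 1 = 1 := by rw [cc_one]; norm_num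
      have h3 : cc 2 1 = 1 := cc_one_succ 1
      have hb1 : cc (0+1) 0 = 0 := cc_zero_succ 0
      rw [cc_zero_left, cc_cast' a 0, cc_cast (a+1) 1, cc_cast a 1, cc_cast a 0, h2, h3, hb1]
      match a with
      | 0 => norm_num [Nat.descFactorial]
      | 1 => norm_num [Nat.descFactorial]
      | a+2 =>
        rw [show (a+2:ℕ)-1 = a+1 from rfl]
        simp only [Nat.descFactorial_one, Nat.descFactorial_zero, Nat.descFactorial_succ,
          Nat.factorial_one, Nat.factorial_zero]
        push_cast [show (a+1)-1 = a from rfl]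
        norm_num [Nat.factorial]
        ring
    | 0, c+1 =>
      -- r = 0, b ≥ 1
      have h2 : cc (c+2) 1 = 1 := cc_one_succ (c+1)
      have h3 : cc (c+3) 1 = 1 := cc_one_succ (c+2)
      have hb1 : cc (c+2) 0 = 0 := cc_zero_succ (c+1)
      rw [cc_cast' a 0, cc_cast (a+1) 1, cc_cast a 1, cc_cast a 0, h2, h3, hb1, cc_one_succ c]
      match a with
      | 0 => norm_num [Nat.descFactorial]
      | 1 => norm_num [Nat.descFactorial]; ring
      | a+2 =>
        rw [show (a+2:ℕ)-1 = a+1 from rfl]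
        simp only [Nat.descFactorial_one, Nat.descFactorial_zero, Nat.descFactorial_succ,
          Nat.factorial_one, Nat.factorial_zero]
        push_cast [show (a+1)-1 = a from rfl]
        norm_num [Nat.factorial]
        ring
    | w+1, 0 =>
      -- q = 1, r = w+1
      have hz : cc 0 (w+2) = 0 := cc_zero_left (w+1)
      have h1 : cc 1 (w+2) = 0 := by
        rw [cc_cast 0 (w+1), Nat.descFactorial_of_lt (by omega)]; simp
      match w with
      | 0 =>
        have h2 : cc 2 2 = 1 := by simp [cc]
        have h3 : cc 1 1 = 1 := by rw [cc_one]; norm_num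
        rw [hz, h1, h2, h3, cc_cast' a 1, cc_cast a 1]
        match a with
        | 0 => norm_num [Nat.descFactorial]
        | 1 => norm_num [Nat.descFactorial]
        | a+2 =>
          rw [show (a+2:ℕ)-1 = a+1 from rfl]
          simp only [Nat.descFactorial_one, Nat.descFactorial_zero, Nat.descFactorial_succ,
            Nat.factorial_one, Nat.factorial_zero, Nat.factorial_two]
          push_cast [show (a+1)-1 = a from rfl]
          field_simp
          ring
      | w+1 =>
        have h2 : cc 2 (w+3) = 0 := by
          rw [cc_cast 1 (w+2), Nat.descFactorial_of_lt (by omega)]; simp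
        have h3 : cc 1 (w+2) = 0 := by
          rw [cc_cast 0 (w+1), Nat.descFactorial_of_lt (by omega)]; simp
        have h4 : cc 1 (w+3) = 0 := by
          rw [cc_cast 0 (w+2), Nat.descFactorial_of_lt (by omega)]; simp
        rw [show w+1+1 = w+2 from rfl, show w+1+2 = w+3 from rfl, hz, h2, h3, h4]
        push_cast; ring
    | w+1, c+1 =>
      -- main case: p = a+1, b = c+1, r = w+1
      rw [show c+1+2 = c+2+1 from rfl, show c+1+1 = c+2 from rfl, show a+1+1 = a+2 from rfl,
          show w+1+1 = w+2 from rfl, show w+1+2 = w+3 from rfl]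
      rw [cc_cast' a (w+1), cc_cast (c+2) (w+1), cc_cast (a+1) (w+2), cc_cast c (w+1),
          cc_cast a (w+2), cc_cast (c+1) (w+1), cc_cast a (w+1), cc_cast (c+1) w]
      rcases Nat.lt_or_ge a (w+1) with ha | ha
      · rw [Nat.descFactorial_of_lt (show a-1 < w+2 by omega),
            Nat.descFactorial_of_lt (show a+1 < w+2 by omega),
            Nat.descFactorial_of_lt (show a < w+2 by omega),
            Nat.descFactorial_of_lt (show a < w+1 by omega)]
        push_cast; ring
      · obtain ⟨s, rfl⟩ : ∃ s, a = (w+1) + s := ⟨a - (w+1), by omega⟩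
        rcases Nat.lt_or_ge (c+1) w with hb | hb
        · rw [Nat.descFactorial_of_lt (show c+2 < w+1 by omega),
              Nat.descFactorial_of_lt (show c < w+1 by omega),
              Nat.descFactorial_of_lt (show c+1 < w+1 by omega),
              Nat.descFactorial_of_lt (show c+1 < w by omega)]
          push_cast; ring
        · obtain ⟨t, hbt⟩ : ∃ t, c + 1 = w + t := ⟨c+1 - w, by omega⟩
          rw [show c+2 = w+t+1 by omega, show c+1 = w+t by omega, show c = w+t-1 by omega]
          have e2 : (((w+1+s).descFactorial (w+2) : ℕ) : ℝ) = (s:ℝ) * ((w+1+s).descFactorial (w+1) : ℝ) := by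
            rw [show w+2 = (w+1)+1 from rfl, Nat.descFactorial_succ, show w+1+s-(w+1) = s by omega]
            push_cast; ring
          have e3 : (((w+1+s+1).descFactorial (w+2) : ℕ) : ℝ) = ((w:ℝ)+1+(s:ℝ)+1) * ((w+1+s).descFactorial (w+1) : ℝ) := by
            rw [show w+2 = (w+1)+1 from rfl, Nat.succ_descFactorial_succ]
            push_cast; ring
          have e2' : (((w+t).descFactorial (w+1) : ℕ) : ℝ) = (t:ℝ) * ((w+t).descFactorial w : ℝ) := by
            rw [Nat.descFactorial_succ, show w+t-w = t by omega]
            push_cast; ring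
          have e3' : (((w+t+1).descFactorial (w+1) : ℕ) : ℝ) = ((w:ℝ)+(t:ℝ)+1) * ((w+t).descFactorial w : ℝ) := by
            rw [Nat.succ_descFactorial_succ]
            push_cast; ring
          have e1 : ((w:ℝ)+1+(s:ℝ)) * (((w+1+s-1).descFactorial (w+2) : ℕ) : ℝ)
              = ((s:ℝ)-1) * (s:ℝ) * ((w+1+s).descFactorial (w+1) : ℝ) := by
            have h2 := congrArg (fun n : ℕ => (n : ℝ)) (L1 (w+1) s)
            rw [show (w+1)+1 = w+2 from rfl] at h2
            match s with
            | 0 => push_cast at h2 ⊢; linear_combination h2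
            | s+1 => push_cast [Nat.succ_sub_one] at h2 ⊢; linear_combination h2
          have e1' : ((w:ℝ)+(t:ℝ)) * (((w+t-1).descFactorial (w+1) : ℕ) : ℝ)
              = ((t:ℝ)-1) * (t:ℝ) * ((w+t).descFactorial w : ℝ) := by
            have h2 := congrArg (fun n : ℕ => (n : ℝ)) (L1 w t)
            match t with
            | 0 => push_cast at h2 ⊢; linear_combination h2
            | t+1 => push_cast [Nat.succ_sub_one] at h2 ⊢; linear_combination h2
          have hrs' : ((w:ℝ)+1+(s:ℝ)) ≠ 0 := by positivity
          have hrt' : ((w:ℝ)+(t:ℝ)) ≠ 0 := by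
            have : (0:ℝ) < ((w+t : ℕ) : ℝ) := by exact_mod_cast show 0 < w + t by omega
            push_cast at this; linarith
          have f1 : (((w+1+s-1).descFactorial (w+2) : ℕ) : ℝ)
              = ((s:ℝ)-1) * (s:ℝ) * ((w+1+s).descFactorial (w+1) : ℝ) / ((w:ℝ)+1+(s:ℝ)) := by
            rw [eq_div_iff hrs']; linarith [e1]
          have f1' : (((w+t-1).descFactorial (w+1) : ℕ) : ℝ)
              = ((t:ℝ)-1) * (t:ℝ) * ((w+t).descFactorial w : ℝ) / ((w:ℝ)+(t:ℝ)) := by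
            rw [eq_div_iff hrt']; linarith [e1']
          rw [show w+1+1 = w+2 from rfl] at *
          rw [f1, f1', e2, e3, e2', e3', fac_succ_cast (w+1), fac_succ_cast w]
          have h1 := fac_ne w
          push_cast
          field_simp
          ring

end FeynCheck
end Stage3

section Stage4
namespace FeynCheck
open Finset

lemma cc_eq_zero_of_lt {p k : ℕ} (h : p < k) : cc p k = 0 := by
  simp [cc, comp_eq_zero_of_lt h]

noncomputable def Ksum (μ : ℝ) (p q : ℕ) : ℝ :=
  ∑ r ∈ Finset.range (p+1), cc p (r+1) * cc q (r+1) * (-μ^2)^r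

noncomputable def Jsum (μ : ℝ) (p q : ℕ) : ℝ :=
  ∑ r ∈ Finset.range (p+1), cc p (r+1) * cc q r * (-μ^2)^r

lemma Ksum_ext (μ : ℝ) (p q L : ℕ) (h : p+1 ≤ L) :
    Ksum μ p q = ∑ r ∈ Finset.range L, cc p (r+1) * cc q (r+1) * (-μ^2)^r := by
  apply Finset.sum_subset (Finset.range_subset_range.2 h)
  intro x hx hnx
  rw [cc_eq_zero_of_lt (show p < x+1 by simp only [Finset.mem_range] at hnx; omega)]
  ring

lemma Jsum_ext (μ : ℝ) (p q L : ℕ) (h : p+1 ≤ L) :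
    Jsum μ p q = ∑ r ∈ Finset.range L, cc p (r+1) * cc q r * (-μ^2)^r := by
  apply Finset.sum_subset (Finset.range_subset_range.2 h)
  intro x hx hnx
  rw [cc_eq_zero_of_lt (show p < x+1 by simp only [Finset.mem_range] at hnx; omega)]
  ring

/-- sum-level three-term recurrence for `Ksum`. -/
lemma IK (μ : ℝ) (p q : ℕ) :
    (q:ℝ)*((p:ℝ)-(q:ℝ)+1)*((p:ℝ)-1) * Ksum μ (p-1) (q+1)
      + (p:ℝ)*((p:ℝ)-(q:ℝ)-1)*((q:ℝ)-1) * Ksum μ (p+1) (q-1)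
    = ((p:ℝ)-(q:ℝ))*(2*(p:ℝ)*(q:ℝ)-(p:ℝ)-(q:ℝ)+1) * Ksum μ p q
      + ((p:ℝ)-(q:ℝ))*(((p:ℝ)-(q:ℝ))^2-1) * ((-μ^2) * Ksum μ p q) := by
  set x : ℝ := -μ^2 with hx
  set A : ℝ := (q:ℝ)*((p:ℝ)-(q:ℝ)+1)*((p:ℝ)-1) with hA
  set B : ℝ := (p:ℝ)*((p:ℝ)-(q:ℝ)-1)*((q:ℝ)-1) with hB
  set D : ℝ := ((p:ℝ)-(q:ℝ))*(2*(p:ℝ)*(q:ℝ)-(p:ℝ)-(q:ℝ)+1) with hD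
  set E : ℝ := ((p:ℝ)-(q:ℝ))*(((p:ℝ)-(q:ℝ))^2-1) with hE
  set L : ℕ := p + q + 2 with hL
  have h1 := Ksum_ext μ (p-1) (q+1) (L+1) (by omega)
  have h2 := Ksum_ext μ (p+1) (q-1) (L+1) (by omega)
  have h3 := Ksum_ext μ p q (L+1) (by omega)
  have h4 := Ksum_ext μ p q L (by omega)
  have main : ∑ r ∈ Finset.range (L+1),
      (A * (cc (p-1) (r+1) * cc (q+1) (r+1)) + B * (cc (p+1) (r+1) * cc (q-1) (r+1))
        - D * (cc p (r+1) * cc q (r+1))) * x^r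
      = ∑ r ∈ Finset.range L, (E * (cc p (r+1) * cc q (r+1))) * x^(r+1) := by
    rw [Finset.sum_range_succ']
    have h0 : (A * (cc (p-1) (0+1) * cc (q+1) (0+1)) + B * (cc (p+1) (0+1) * cc (q-1) (0+1))
        - D * (cc p (0+1) * cc q (0+1))) * x^0 = 0 := by
      have := EK0 p q
      simp only [pow_zero, mul_one]
      rw [hA, hB, hD]
      linear_combination this
    rw [h0, add_zero]
    apply Finset.sum_congr rfl
    intro r _
    have := EKS p q r
    rw [hA, hB, hD, hE]
    linear_combination (x^(r+1)) * this
  have lhs_eq : ∑ r ∈ Finset.range (L+1),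
      (A * (cc (p-1) (r+1) * cc (q+1) (r+1)) + B * (cc (p+1) (r+1) * cc (q-1) (r+1))
        - D * (cc p (r+1) * cc q (r+1))) * x^r
      = A * Ksum μ (p-1) (q+1) + B * Ksum μ (p+1) (q-1) - D * Ksum μ p q := by
    rw [h1, h2, h3, Finset.mul_sum, Finset.mul_sum, Finset.mul_sum,
      ← Finset.sum_add_distrib, ← Finset.sum_sub_distrib]
    apply Finset.sum_congr rfl
    intro r _
    ring
  have rhs_eq : ∑ r ∈ Finset.range L, (E * (cc p (r+1) * cc q (r+1))) * x^(r+1)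
      = E * (x * Ksum μ p q) := by
    rw [h4, Finset.mul_sum, Finset.mul_sum]
    apply Finset.sum_congr rfl
    intro r _
    ring
  rw [lhs_eq, rhs_eq] at main
  linarith [main]

/-- sum-level three-term recurrence for `Jsum` (with `q = b+1 ≥ 1`). -/
lemma IJ (μ : ℝ) (p b : ℕ) :
    ((p:ℝ)-((b:ℝ)+1))*(((b:ℝ)+1)+1)*((p:ℝ)-1) * Jsum μ (p-1) (b+2)
      + ((p:ℝ)-((b:ℝ)+1)-2)*(((b:ℝ)+1)-1)*((p:ℝ)-1) * Jsum μ (p+1) b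
    = 2*((b:ℝ)+1)*((p:ℝ)-1)*((p:ℝ)-((b:ℝ)+1)-1) * Jsum μ p (b+1)
      + ((p:ℝ)-((b:ℝ)+1)-1)*((p:ℝ)-((b:ℝ)+1))*((p:ℝ)-((b:ℝ)+1)-2) * ((-μ^2) * Jsum μ p (b+1)) := by
  set x : ℝ := -μ^2 with hx
  set A : ℝ := ((p:ℝ)-((b:ℝ)+1))*(((b:ℝ)+1)+1)*((p:ℝ)-1) with hA
  set B : ℝ := ((p:ℝ)-((b:ℝ)+1)-2)*(((b:ℝ)+1)-1)*((p:ℝ)-1) with hB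
  set D : ℝ := 2*((b:ℝ)+1)*((p:ℝ)-1)*((p:ℝ)-((b:ℝ)+1)-1) with hD
  set E : ℝ := ((p:ℝ)-((b:ℝ)+1)-1)*((p:ℝ)-((b:ℝ)+1))*((p:ℝ)-((b:ℝ)+1)-2) with hE
  set L : ℕ := p + b + 2 with hL
  have h1 := Jsum_ext μ (p-1) (b+2) (L+1) (by omega)
  have h2 := Jsum_ext μ (p+1) b (L+1) (by omega)
  have h3 := Jsum_ext μ p (b+1) (L+1) (by omega)
  have h4 := Jsum_ext μ p (b+1) L (by omega)
  have main : ∑ r ∈ Finset.range (L+1),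
      (A * (cc (p-1) (r+1) * cc (b+2) r) + B * (cc (p+1) (r+1) * cc b r)
        - D * (cc p (r+1) * cc (b+1) r)) * x^r
      = ∑ r ∈ Finset.range L, (E * (cc p (r+1) * cc (b+1) r)) * x^(r+1) := by
    rw [Finset.sum_range_succ']
    have h0 : (A * (cc (p-1) (0+1) * cc (b+2) 0) + B * (cc (p+1) (0+1) * cc b 0)
        - D * (cc p (0+1) * cc (b+1) 0)) * x^0 = 0 := by
      have := EJ0 p b
      simp only [pow_zero, mul_one]
      rw [hA, hB, hD]
      linear_combination this
    rw [h0, add_zero]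
    apply Finset.sum_congr rfl
    intro r _
    have := EJS p b r
    rw [hA, hB, hD, hE]
    linear_combination (x^(r+1)) * this
  have lhs_eq : ∑ r ∈ Finset.range (L+1),
      (A * (cc (p-1) (r+1) * cc (b+2) r) + B * (cc (p+1) (r+1) * cc b r)
        - D * (cc p (r+1) * cc (b+1) r)) * x^r
      = A * Jsum μ (p-1) (b+2) + B * Jsum μ (p+1) b - D * Jsum μ p (b+1) := by
    rw [h1, h2, h3, Finset.mul_sum, Finset.mul_sum, Finset.mul_sum,
      ← Finset.sum_add_distrib, ← Finset.sum_sub_distrib]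
    apply Finset.sum_congr rfl
    intro r _
    ring
  have rhs_eq : ∑ r ∈ Finset.range L, (E * (cc p (r+1) * cc (b+1) r)) * x^(r+1)
      = E * (x * Jsum μ p (b+1)) := by
    rw [h4, Finset.mul_sum, Finset.mul_sum]
    apply Finset.sum_congr rfl
    intro r _
    ring
  rw [lhs_eq, rhs_eq] at main
  linarith [main]

end FeynCheck
end Stage4

section Stage5
namespace FeynCheck
open Finset

lemma turnsOf_ext (N : ℕ) (hN : 1 ≤ N) (R : Finset ℕ) (hR : R ⊆ Finset.range N) :
    turnsOf (N+1) R = turnsOf N R + (if N-1 ∈ R then 1 else 0) := by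
  have hNR : N ∉ R := fun h => by simpa using hR h
  unfold turnsOf
  rw [Nat.Ico_succ_right_eq_insert_Ico hN, Finset.filter_insert]
  have hNico : N ∉ Finset.Ico 1 N := by simp
  by_cases hc : N - 1 ∈ R
  · rw [if_pos (by simp [hNR, hc]), if_pos hc,
      Finset.card_insert_of_notMem (fun h => hNico (Finset.mem_of_mem_filter _ h))]
  · rw [if_neg (by simp [hNR, hc]), if_neg hc]
    omega

lemma turnsOf_insert_top (N : ℕ) (hN : 1 ≤ N) (R : Finset ℕ) (hR : R ⊆ Finset.range N) :
    turnsOf (N+1) (insert N R) = turnsOf N R + (if N-1 ∈ R then 0 else 1) := by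
  have hNR : N ∉ R := fun h => by simpa using hR h
  unfold turnsOf
  rw [Nat.Ico_succ_right_eq_insert_Ico hN, Finset.filter_insert]
  have hNico : N ∉ Finset.Ico 1 N := by simp
  have hfilter : Finset.filter (fun i => ¬((i ∈ insert N R) ↔ (i-1 ∈ insert N R))) (Finset.Ico 1 N)
      = Finset.filter (fun i => ¬((i ∈ R) ↔ (i-1 ∈ R))) (Finset.Ico 1 N) := by
    apply Finset.filter_congr
    intro i hi
    simp only [Finset.mem_Ico] at hi
    have h1 : i ≠ N := by omega
    have h2 : i - 1 ≠ N := by omega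
    simp [Finset.mem_insert, h1, h2]
  have hd : N - 1 ≠ N := by omega
  by_cases hc : N - 1 ∈ R
  · rw [if_neg (by simp [Finset.mem_insert, hd, hc]), hfilter, if_pos hc]
    omega
  · rw [if_pos (by simp [Finset.mem_insert, hd, hc]), hfilter, if_neg hc,
      Finset.card_insert_of_notMem (fun h => hNico (Finset.mem_of_mem_filter _ h))]

noncomputable def SRs (z : ℂ) (N p : ℕ) : ℂ :=
  ∑ R ∈ (Finset.range N).powerset,
    if 0 ∈ R ∧ N-1 ∈ R ∧ R.card = p then z ^ turnsOf N R else 0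

noncomputable def SLs (z : ℂ) (N p : ℕ) : ℂ :=
  ∑ R ∈ (Finset.range N).powerset,
    if 0 ∈ R ∧ N-1 ∉ R ∧ R.card = p then z ^ turnsOf N R else 0

lemma SRs_zero (z : ℂ) (N : ℕ) : SRs z N 0 = 0 := by
  apply Finset.sum_eq_zero
  intro R _
  rw [if_neg]
  rintro ⟨h0, -, hc⟩
  rw [Finset.card_eq_zero.mp hc] at h0
  simp at h0

lemma SRs_big (z : ℂ) (N p : ℕ) (h : N < p) : SRs z N p = 0 := by
  apply Finset.sum_eq_zero
  intro R hR
  rw [if_neg]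
  rintro ⟨-, -, hc⟩
  have := Finset.card_le_card (Finset.mem_powerset.mp hR)
  rw [Finset.card_range] at this
  omega

lemma SLs_big (z : ℂ) (N p : ℕ) (h : N < p) : SLs z N p = 0 := by
  apply Finset.sum_eq_zero
  intro R hR
  rw [if_neg]
  rintro ⟨-, -, hc⟩
  have := Finset.card_le_card (Finset.mem_powerset.mp hR)
  rw [Finset.card_range] at this
  omega

lemma SRs_one (z : ℂ) (p : ℕ) : SRs z 1 p = if p = 1 then 1 else 0 := by
  rw [SRs, Finset.range_one, show ({0} : Finset ℕ) = insert 0 ∅ from rfl,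
    Finset.sum_powerset_insert (by simp), Finset.powerset_empty,
    Finset.sum_singleton, Finset.sum_singleton]
  have ht : turnsOf 1 (insert 0 (∅ : Finset ℕ)) = 0 := by
    unfold turnsOf
    simp
  by_cases hp : p = 1
  · subst hp
    rw [if_neg (by simp), if_pos ⟨by simp, by simp, by simp⟩, ht]
    simp
  · rw [if_neg (by simp), if_neg (by
      rintro ⟨-, -, hcon⟩
      simp at hcon
      omega)]
    simp [hp]

lemma SLs_one (z : ℂ) (p : ℕ) : SLs z 1 p = 0 := by
  rw [SLs, Finset.range_one, show ({0} : Finset ℕ) = insert 0 ∅ from rfl,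
    Finset.sum_powerset_insert (by simp), Finset.powerset_empty,
    Finset.sum_singleton, Finset.sum_singleton]
  rw [if_neg (by simp), if_neg (by simp)]
  simp

lemma SRs_rec (z : ℂ) (N p : ℕ) (hN : 1 ≤ N) :
    SRs z (N+1) (p+1) = SRs z N p + z * SLs z N p := by
  rw [SRs, show Finset.range (N+1) = insert N (Finset.range N) from Finset.range_add_one,
    Finset.sum_powerset_insert (Finset.notMem_range_self)]
  have h1 : ∑ R ∈ (Finset.range N).powerset,
      (if 0 ∈ R ∧ (N+1)-1 ∈ R ∧ R.card = p+1 then z ^ turnsOf (N+1) R else 0) = 0 := by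
    apply Finset.sum_eq_zero
    intro R hR
    rw [if_neg]
    rintro ⟨-, hm, -⟩
    have := Finset.mem_powerset.mp hR hm
    simp at this
  rw [h1, zero_add]
  have h2 : ∀ R ∈ (Finset.range N).powerset,
      (if 0 ∈ insert N R ∧ (N+1)-1 ∈ insert N R ∧ (insert N R).card = p+1
        then z ^ turnsOf (N+1) (insert N R) else 0)
      = (if 0 ∈ R ∧ N-1 ∈ R ∧ R.card = p then z ^ turnsOf N R else 0)
        + z * (if 0 ∈ R ∧ N-1 ∉ R ∧ R.card = p then z ^ turnsOf N R else 0) := by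
    intro R hR
    have hsub := Finset.mem_powerset.mp hR
    have hNR : N ∉ R := fun h => by simpa using hsub h
    have hcard : (insert N R).card = R.card + 1 := Finset.card_insert_of_notMem hNR
    have h0 : (0 ∈ insert N R) ↔ (0 ∈ R) := by
      simp [Finset.mem_insert]
      omega
    have hturn := turnsOf_insert_top N hN R hsub
    by_cases hz : 0 ∈ R
    · by_cases hc : R.card = p
      · by_cases hm : N - 1 ∈ R
        · rw [if_pos ⟨h0.mpr hz, by simp, by rw [hcard, hc]⟩, if_pos ⟨hz, hm, hc⟩, if_neg (by tauto)]
          rw [hturn, if_pos hm]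
          ring
        · rw [if_pos ⟨h0.mpr hz, by simp, by rw [hcard, hc]⟩, if_neg (by tauto), if_pos ⟨hz, hm, hc⟩]
          rw [hturn, if_neg hm]
          ring
      · rw [if_neg (by rintro ⟨-, -, hcon⟩; rw [hcard] at hcon; omega),
          if_neg (by tauto), if_neg (by tauto)]
        ring
    · rw [if_neg (fun hcon => hz (h0.mp hcon.1)), if_neg (by tauto), if_neg (by tauto)]
      ring
  rw [Finset.sum_congr rfl h2, Finset.sum_add_distrib, ← Finset.mul_sum]
  rfl

lemma SLs_rec (z : ℂ) (N p : ℕ) (hN : 1 ≤ N) :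
    SLs z (N+1) p = SLs z N p + z * SRs z N p := by
  rw [SLs, show Finset.range (N+1) = insert N (Finset.range N) from Finset.range_add_one,
    Finset.sum_powerset_insert (Finset.notMem_range_self)]
  have h1 : ∑ R ∈ (Finset.range N).powerset,
      (if 0 ∈ insert N R ∧ (N+1)-1 ∉ insert N R ∧ (insert N R).card = p
        then z ^ turnsOf (N+1) (insert N R) else 0) = 0 := by
    apply Finset.sum_eq_zero
    intro R _
    rw [if_neg]
    rintro ⟨-, hm, -⟩
    exact hm (by simp)
  rw [h1, add_zero]
  have h2 : ∀ R ∈ (Finset.range N).powerset,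
      (if 0 ∈ R ∧ (N+1)-1 ∉ R ∧ R.card = p then z ^ turnsOf (N+1) R else 0)
      = (if 0 ∈ R ∧ N-1 ∉ R ∧ R.card = p then z ^ turnsOf N R else 0)
        + z * (if 0 ∈ R ∧ N-1 ∈ R ∧ R.card = p then z ^ turnsOf N R else 0) := by
    intro R hR
    have hsub := Finset.mem_powerset.mp hR
    have hNR : N ∉ R := fun h => by simpa using hsub h
    have hturn := turnsOf_ext N hN R hsub
    have hN1 : (N+1)-1 ∉ R := by simpa using hNR
    by_cases hz : 0 ∈ R
    · by_cases hc : R.card = p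
      · by_cases hm : N - 1 ∈ R
        · rw [if_pos ⟨hz, hN1, hc⟩, if_neg (by tauto), if_pos ⟨hz, hm, hc⟩]
          rw [hturn, if_pos hm]
          ring
        · rw [if_pos ⟨hz, hN1, hc⟩, if_pos ⟨hz, hm, hc⟩, if_neg (by tauto)]
          rw [hturn, if_neg hm]
          ring
      · rw [if_neg (by tauto), if_neg (by tauto), if_neg (by tauto)]
        ring
    · rw [if_neg (by tauto), if_neg (by tauto), if_neg (by tauto)]
      ring
  rw [Finset.sum_congr rfl h2, Finset.sum_add_distrib, ← Finset.mul_sum]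
  rfl

end FeynCheck
end Stage5

section Stage6
namespace FeynCheck
open Finset

noncomputable def FRs (z : ℂ) (p q : ℕ) : ℂ :=
  ∑ r ∈ Finset.range (p+1), ((comp p (r+1) * comp q r : ℕ) : ℂ) * z^(2*r)

noncomputable def FLs (z : ℂ) (p q : ℕ) : ℂ :=
  ∑ r ∈ Finset.range (p+1), ((comp p (r+1) * comp q (r+1) : ℕ) : ℂ) * z^(2*r+1)

lemma FRs_ext (z : ℂ) (p q L : ℕ) (h : p+1 ≤ L) :
    FRs z p q = ∑ r ∈ Finset.range L, ((comp p (r+1) * comp q r : ℕ) : ℂ) * z^(2*r) := by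
  apply Finset.sum_subset (Finset.range_subset_range.2 h)
  intro x hx hnx
  rw [comp_eq_zero_of_lt (show p < x+1 by simp only [Finset.mem_range] at hnx; omega)]
  simp

lemma FRs_zero_left (z : ℂ) (q : ℕ) : FRs z 0 q = 0 := by
  simp [FRs, Finset.range_one]

lemma FLs_zero_left (z : ℂ) (q : ℕ) : FLs z 0 q = 0 := by
  simp [FLs, Finset.range_one]

lemma FLs_zero_right (z : ℂ) (p : ℕ) : FLs z p 0 = 0 := by
  apply Finset.sum_eq_zero
  intro r _
  rw [comp_zero_left]
  simp

lemma FRs_one_zero (z : ℂ) : FRs z 1 0 = 1 := by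
  rw [FRs]
  rw [Finset.sum_range_succ, Finset.sum_range_one]
  norm_num [comp, comp_succ_succ]

lemma FRs_succ (z : ℂ) (p q : ℕ) (h : 1 ≤ p + q) :
    FRs z (p+1) q = FRs z p q + z * FLs z p q := by
  have hsplit : FRs z (p+1) q
      = (∑ r ∈ Finset.range (p+2), ((comp p (r+1) * comp q r : ℕ) : ℂ) * z^(2*r))
        + ∑ r ∈ Finset.range (p+2), ((comp p r * comp q r : ℕ) : ℂ) * z^(2*r) := by
    rw [FRs, ← Finset.sum_add_distrib]
    apply Finset.sum_congr rfl
    intro r _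
    rw [comp_pascal p r]
    push_cast
    ring
  rw [hsplit, ← FRs_ext z p q (p+2) (by omega)]
  congr 1
  rw [Finset.sum_range_succ']
  have h0 : ((comp p 0 * comp q 0 : ℕ) : ℂ) * z^(2*0) = 0 := by
    rcases p with _|p'
    · have : comp q 0 = 0 := by
        rw [comp_zero]
        have hq : q ≠ 0 := by omega
        simp [hq]
      rw [this]; simp
    · have : comp (p'+1) 0 = 0 := by
        rw [comp_zero]; simp
      rw [this]; simp
  rw [h0, add_zero, FLs, Finset.mul_sum]
  apply Finset.sum_congr rfl
  intro r _
  push_cast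
  ring

lemma FLs_succ (z : ℂ) (p q : ℕ) :
    FLs z p (q+1) = FLs z p q + z * FRs z p q := by
  rw [FLs, FLs, FRs, Finset.mul_sum, ← Finset.sum_add_distrib]
  apply Finset.sum_congr rfl
  intro r _
  rw [comp_pascal q r]
  push_cast
  ring

lemma closed (z : ℂ) : ∀ N, 1 ≤ N → ∀ p q : ℕ, p + q = N →
    SRs z N p = FRs z p q ∧ SLs z N p = FLs z p q := by
  intro N
  induction N with
  | zero => omega
  | succ N ih =>
    intro hN p q hpq
    rcases Nat.eq_zero_or_pos N with h0 | hposN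
    · subst h0
      rcases p with _|p'
      · obtain rfl : q = 1 := by omega
        refine ⟨?_, ?_⟩
        · rw [SRs_zero, FRs_zero_left]
        · rw [SLs_one, FLs_zero_left]
      · obtain rfl : p' = 0 := by omega
        obtain rfl : q = 0 := by omega
        refine ⟨?_, ?_⟩
        · rw [SRs_one, FRs_one_zero]; simp
        · rw [SLs_one, FLs_zero_right]
    · constructor
      · rcases p with _|p'
        · rw [SRs_zero, FRs_zero_left]
        · rw [SRs_rec z N p' hposN]
          obtain ⟨ihR, ihL⟩ := ih hposN p' q (by omega)
          rw [ihR, ihL, FRs_succ z p' q (by omega)]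
      · rcases q with _|q'
        · rw [SLs_rec z N p hposN, SLs_big z N p (by omega), SRs_big z N p (by omega),
            FLs_zero_right]
          ring
        · rw [SLs_rec z N p hposN]
          obtain ⟨ihR, ihL⟩ := ih hposN p q' (by omega)
          rw [ihR, ihL, FLs_succ z p q']

lemma neg_I_mu_sq (μ : ℝ) : (-Complex.I * (μ:ℂ))^2 = (((-μ^2 : ℝ)) : ℂ) := by
  rw [mul_pow]
  rw [show (-Complex.I)^2 = -1 by rw [neg_pow]; simp [Complex.I_sq]]
  push_cast
  ring

lemma FRs_eval (μ : ℝ) (p q : ℕ) : FRs (-Complex.I * μ) p q = ((Jsum μ p q : ℝ) : ℂ) := by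
  rw [FRs, Jsum, Complex.ofReal_sum]
  apply Finset.sum_congr rfl
  intro r _
  rw [pow_mul, neg_I_mu_sq μ]
  push_cast [cc]
  ring

lemma FLs_eval (μ : ℝ) (p q : ℕ) :
    FLs (-Complex.I * μ) p q = (-Complex.I * μ) * ((Ksum μ p q : ℝ) : ℂ) := by
  rw [FLs, Ksum, Complex.ofReal_sum, Finset.mul_sum]
  apply Finset.sum_congr rfl
  intro r _
  rw [pow_succ, pow_mul, neg_I_mu_sq μ]
  push_cast [cc]
  ring

lemma waveA_bridge (μ : ℝ) (p q : ℕ) (h : 1 ≤ p + q) :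
    waveA ((p:ℤ) - (q:ℤ)) (p+q) μ
      = (((1 + μ^2) ^ ((1 - ((p+q : ℕ) : ℝ))/2) : ℝ) : ℂ) *
        (((μ * Ksum μ p q : ℝ) : ℂ) + ((Jsum μ p q : ℝ) : ℂ) * Complex.I) := by
  rw [waveA]
  have hsum : (∑ R ∈ (Finset.range (p+q)).powerset,
      if 0 ∈ R ∧ 2*(R.card:ℤ) - ((p+q:ℕ):ℤ) = (p:ℤ)-(q:ℤ)
        then (-Complex.I * (μ:ℂ))^(turnsOf (p+q) R) else 0)
      = SRs (-Complex.I*μ) (p+q) p + SLs (-Complex.I*μ) (p+q) p := by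
    rw [SRs, SLs, ← Finset.sum_add_distrib]
    apply Finset.sum_congr rfl
    intro R hR
    have hcard : R.card ≤ p + q := by
      have := Finset.card_le_card (Finset.mem_powerset.mp hR)
      rwa [Finset.card_range] at this
    by_cases hz : 0 ∈ R
    · by_cases hc : R.card = p
      · have hcond : 2*(R.card:ℤ) - ((p+q:ℕ):ℤ) = (p:ℤ)-(q:ℤ) := by push_cast; omega
        rw [if_pos ⟨hz, hcond⟩]
        by_cases hm : (p+q)-1 ∈ R
        · rw [if_pos ⟨hz, hm, hc⟩, if_neg (by tauto)]; ring
        · rw [if_neg (by tauto), if_pos ⟨hz, hm, hc⟩]; ring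
      · have hcond : ¬(2*(R.card:ℤ) - ((p+q:ℕ):ℤ) = (p:ℤ)-(q:ℤ)) := by push_cast; omega
        rw [if_neg (by tauto), if_neg (by tauto), if_neg (by tauto)]; ring
    · rw [if_neg (by tauto), if_neg (by tauto), if_neg (by tauto)]; ring
  rw [hsum]
  obtain ⟨hr, hl⟩ := closed (-Complex.I * μ) (p+q) h p q rfl
  rw [hr, hl, FRs_eval, FLs_eval]
  set C : ℂ := (((1 + μ^2) ^ ((1 - ((p+q : ℕ) : ℝ))/2) : ℝ) : ℂ) with hC
  push_cast
  linear_combination (-(C * (μ:ℂ) * ((Ksum μ p q : ℝ) : ℂ))) * Complex.I_mul_I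

lemma waveA_re (μ : ℝ) (p q : ℕ) (h : 1 ≤ p + q) :
    (waveA ((p:ℤ) - (q:ℤ)) (p+q) μ).re
      = (1 + μ^2) ^ ((1 - ((p+q : ℕ) : ℝ))/2) * (μ * Ksum μ p q) := by
  rw [waveA_bridge μ p q h]
  simp [Complex.add_re, Complex.mul_re, Complex.mul_im, Complex.I_re, Complex.I_im,
    Complex.ofReal_re, Complex.ofReal_im]

lemma waveA_im (μ : ℝ) (p q : ℕ) (h : 1 ≤ p + q) :
    (waveA ((p:ℤ) - (q:ℤ)) (p+q) μ).im
      = (1 + μ^2) ^ ((1 - ((p+q : ℕ) : ℝ))/2) * Jsum μ p q := by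
  rw [waveA_bridge μ p q h]
  simp [Complex.add_im, Complex.mul_re, Complex.mul_im, Complex.I_re, Complex.I_im,
    Complex.ofReal_re, Complex.ofReal_im]

lemma waveA_zero (μ : ℝ) (X : ℤ) (N : ℕ)
    (h : ∀ c : ℕ, c ≤ N → 2*(c:ℤ) - (N:ℤ) ≠ X) : waveA X N μ = 0 := by
  rw [waveA, Finset.sum_eq_zero, mul_zero]
  intro R hR
  rw [if_neg]
  rintro ⟨-, hc⟩
  refine h R.card ?_ hc
  have := Finset.card_le_card (Finset.mem_powerset.mp hR)
  rwa [Finset.card_range] at this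

lemma Ksum_zero_left (μ : ℝ) (q : ℕ) : Ksum μ 0 q = 0 := by
  simp [Ksum, Finset.range_one]

lemma Ksum_zero_right (μ : ℝ) (p : ℕ) : Ksum μ p 0 = 0 := by
  apply Finset.sum_eq_zero
  intro r _
  rw [cc_zero_left]
  ring

lemma Jsum_zero_left (μ : ℝ) (q : ℕ) : Jsum μ 0 q = 0 := by
  simp [Jsum, Finset.range_one]

lemma Jsum_q0 (μ : ℝ) (p : ℕ) : Jsum μ (p+1) 0 = 1 := by
  rw [Jsum, Finset.sum_eq_single 0]
  · rw [cc_one_succ, cc_zero_right]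
    norm_num
  · intro r _ hne
    rcases r with _|r'
    · omega
    · rw [cc_zero_left]
      ring
  · intro hcon
    simp at hcon

lemma cc_two (n : ℕ) : cc (n+1) 2 = (n:ℝ) := by
  simp [cc, comp_succ_succ, Nat.choose_one_right]

lemma Jsum_one (μ : ℝ) (n : ℕ) : Jsum μ (n+1) 1 = (n:ℝ) * (-μ^2) := by
  rw [Jsum, Finset.sum_eq_single 1]
  · rw [show (1:ℕ)+1 = 2 from rfl, cc_two, show cc 1 1 = 1 from cc_one_succ 0]
    ring
  · intro r _ hne
    rcases r with _|r'
    · rw [cc_zero_succ 0]; ring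
    · rcases r' with _|r''
      · omega
      · rw [cc_eq_zero_of_lt (show 1 < r''+1+1 by omega)]; ring
  · intro hcon
    simp at hcon

lemma ReZero (μ : ℝ) (N : ℕ) (hN : 1 ≤ N) (Y : ℤ)
    (h : ∀ p q : ℕ, p + q = N → (p:ℤ) - (q:ℤ) = Y → p = 0 ∨ q = 0) :
    (waveA Y N μ).re = 0 := by
  by_cases hex : ∃ p q : ℕ, p + q = N ∧ (p:ℤ) - (q:ℤ) = Y
  · obtain ⟨p, q, hpq, hY⟩ := hex
    rw [← hY, ← hpq, waveA_re μ p q (by omega)]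
    rcases h p q hpq hY with h0 | h0 <;> subst h0
    · rw [Ksum_zero_left]; ring
    · rw [Ksum_zero_right]; ring
  · rw [waveA_zero μ Y N ?_]
    · simp
    · intro c hc hcon
      exact hex ⟨c, N - c, by omega, by push_cast; omega⟩

lemma ImZero (μ : ℝ) (N : ℕ) (hN : 1 ≤ N) (Y : ℤ)
    (h : ∀ p q : ℕ, p + q = N → (p:ℤ) - (q:ℤ) = Y → p = 0) :
    (waveA Y N μ).im = 0 := by
  by_cases hex : ∃ p q : ℕ, p + q = N ∧ (p:ℤ) - (q:ℤ) = Y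
  · obtain ⟨p, q, hpq, hY⟩ := hex
    rw [← hY, ← hpq, waveA_im μ p q (by omega)]
    have h0 := h p q hpq hY
    subst h0
    rw [Jsum_zero_left]; ring
  · rw [waveA_zero μ Y N ?_]
    · simp
    · intro c hc hcon
      exact hex ⟨c, N - c, by omega, by push_cast; omega⟩

end FeynCheck
end Stage6

section Stage7
namespace FeynCheck

theorem T1 (μ : ℝ) (n : ℕ) (hn : 1 ≤ n) (X : ℤ) :
    ((X:ℝ)+1)*(((X:ℝ)-1)^2-(n:ℝ)^2) * (waveA (X-2) (n+1) μ).re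
      + ((X:ℝ)-1)*(((X:ℝ)+1)^2-(n:ℝ)^2) * (waveA (X+2) (n+1) μ).re
    = 2*(X:ℝ)*((1+2*μ^2)*((X:ℝ)^2-1)-(n:ℝ)^2) * (waveA X (n+1) μ).re := by
  set C : ℝ := (1 + μ^2) ^ ((1 - ((n+1 : ℕ) : ℝ))/2) with hC
  by_cases hex : ∃ p q : ℕ, p + q = n+1 ∧ (p:ℤ) - (q:ℤ) = X
  · obtain ⟨p, q, hpq, hX⟩ := hex
    have hre3 : (waveA X (n+1) μ).re = C * (μ * Ksum μ p q) := by
      rw [← hX, ← hpq, waveA_re μ p q (by omega), hpq]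
    have hre1 : (waveA (X-2) (n+1) μ).re = C * (μ * Ksum μ (p-1) (q+1)) := by
      rcases p with _|p'
      · have hz : (waveA (X-2) (n+1) μ).re = 0 := by
          apply ReZero μ (n+1) (by omega)
          intro p' q' hpq' hY'
          exfalso
          omega
        rw [hz, show (0:ℕ)-1 = 0 from rfl, Ksum_zero_left]
        ring
      · have harg : X - 2 = ((p':ℕ):ℤ) - ((q+1:ℕ):ℤ) := by push_cast at hX ⊢; omega
        have hN : n+1 = p' + (q+1) := by omega
        rw [harg, hN, waveA_re μ p' (q+1) (by omega), ← hN, hC]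
        simp
    have hre2 : (waveA (X+2) (n+1) μ).re = C * (μ * Ksum μ (p+1) (q-1)) := by
      rcases q with _|q'
      · have hz : (waveA (X+2) (n+1) μ).re = 0 := by
          apply ReZero μ (n+1) (by omega)
          intro p' q' hpq' hY'
          exfalso
          omega
        rw [hz, show (0:ℕ)-1 = 0 from rfl, Ksum_zero_right]
        ring
      · have harg : X + 2 = ((p+1:ℕ):ℤ) - ((q':ℕ):ℤ) := by push_cast at hX ⊢; omega
        have hN : n+1 = (p+1) + q' := by omega
        rw [harg, hN, waveA_re μ (p+1) q' (by omega), ← hN, hC]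
        simp
    rw [hre1, hre2, hre3]
    have hik := IK μ p q
    have hXr : (X:ℝ) = (p:ℝ) - (q:ℝ) := by
      have := congrArg (Int.cast : ℤ → ℝ) hX
      push_cast at this
      linarith
    have hnr : (n:ℝ) = (p:ℝ) + (q:ℝ) - 1 := by
      have := congrArg (Nat.cast : ℕ → ℝ) hpq
      push_cast at this
      linarith
    rw [hXr, hnr]
    linear_combination (-4 * C * μ) * hik
  · have h1 : (waveA (X-2) (n+1) μ).re = 0 := by
      apply ReZero μ (n+1) (by omega)
      intro p q hpq hY
      rcases q with _|q'
      · right; rfl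
      · exfalso
        exact hex ⟨p+1, q', by omega, by push_cast at hY ⊢; omega⟩
    have h2 : (waveA (X+2) (n+1) μ).re = 0 := by
      apply ReZero μ (n+1) (by omega)
      intro p q hpq hY
      rcases p with _|p'
      · left; rfl
      · exfalso
        exact hex ⟨p', q+1, by omega, by push_cast at hY ⊢; omega⟩
    have h3 : (waveA X (n+1) μ).re = 0 := by
      apply ReZero μ (n+1) (by omega)
      intro p q hpq hY
      exact absurd ⟨p, q, hpq, hY⟩ hex
    rw [h1, h2, h3]; ring

theorem T2 (μ : ℝ) (n : ℕ) (hn : 1 ≤ n) (X : ℤ) :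
    ((X:ℝ)+1)*(((X:ℝ)-1)^2-((n:ℝ)+1)^2) * (waveA (X-1) (n+1) μ).im
      + ((X:ℝ)-1)*(((X:ℝ)+1)^2-((n:ℝ)-1)^2) * (waveA (X+3) (n+1) μ).im
    = 2*(X:ℝ)*((1+2*μ^2)*((X:ℝ)^2-1)-(n:ℝ)^2+1) * (waveA (X+1) (n+1) μ).im := by
  set C : ℝ := (1 + μ^2) ^ ((1 - ((n+1 : ℕ) : ℝ))/2) with hC
  by_cases hXn : X = (n:ℤ)
  · subst hXn
    obtain ⟨m, rfl⟩ : ∃ m, n = m+1 := ⟨n-1, by omega⟩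
    have him1 : (waveA (((m+1:ℕ):ℤ)-1) (m+1+1) μ).im = C * Jsum μ (m+1) 1 := by
      rw [show ((m+1:ℕ):ℤ)-1 = ((m+1:ℕ):ℤ) - ((1:ℕ):ℤ) by push_cast; ring,
        show m+1+1 = (m+1) + 1 from rfl, waveA_im μ (m+1) 1 (by omega), hC]
    have him3 : (waveA (((m+1:ℕ):ℤ)+1) (m+1+1) μ).im = C * Jsum μ (m+2) 0 := by
      rw [show ((m+1:ℕ):ℤ)+1 = ((m+2:ℕ):ℤ) - ((0:ℕ):ℤ) by push_cast; ring,
        show m+1+1 = (m+2) + 0 from rfl, waveA_im μ (m+2) 0 (by omega), hC]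
    have him2 : (waveA (((m+1:ℕ):ℤ)+3) (m+1+1) μ).im = 0 := by
      apply ImZero μ (m+1+1) (by omega)
      intro p q hpq hY
      omega
    rw [him1, him2, him3, Jsum_one, show (m+2:ℕ) = (m+1)+1 from rfl, Jsum_q0]
    push_cast
    ring
  · by_cases hex : ∃ p b : ℕ, p + (b+1) = n+1 ∧ (p:ℤ) - ((b+1:ℕ):ℤ) = X + 1
    · obtain ⟨p, b, hpq, hX⟩ := hex
      have him3 : (waveA (X+1) (n+1) μ).im = C * Jsum μ p (b+1) := by
        rw [← hX, ← hpq, waveA_im μ p (b+1) (by omega), hpq]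
      have him1 : (waveA (X-1) (n+1) μ).im = C * Jsum μ (p-1) (b+2) := by
        rcases p with _|p'
        · have hz : (waveA (X-1) (n+1) μ).im = 0 := by
            apply ImZero μ (n+1) (by omega)
            intro p' q' hpq' hY'
            exfalso
            omega
          rw [hz, show (0:ℕ)-1 = 0 from rfl, Jsum_zero_left]
          ring
        · have harg : X - 1 = ((p':ℕ):ℤ) - ((b+2:ℕ):ℤ) := by push_cast at hX ⊢; omega
          have hN : n+1 = p' + (b+2) := by omega
          rw [harg, hN, waveA_im μ p' (b+2) (by omega), ← hN, hC]
          simp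
      have him2 : (waveA (X+3) (n+1) μ).im = C * Jsum μ (p+1) b := by
        have harg : X + 3 = ((p+1:ℕ):ℤ) - ((b:ℕ):ℤ) := by push_cast at hX ⊢; omega
        have hN : n+1 = (p+1) + b := by omega
        rw [harg, hN, waveA_im μ (p+1) b (by omega), ← hN, hC]
      rw [him1, him2, him3]
      have hij := IJ μ p b
      have hXr : (X:ℝ) = (p:ℝ) - (b:ℝ) - 2 := by
        have := congrArg (Int.cast : ℤ → ℝ) hX
        push_cast at this
        linarith
      have hnr : (n:ℝ) = (p:ℝ) + (b:ℝ) := by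
        have := congrArg (Nat.cast : ℕ → ℝ) hpq
        push_cast at this
        linarith
      rw [hXr, hnr]
      linear_combination (-4 * C) * hij
    · by_cases hX2 : X = (n:ℤ) + 2
      · subst hX2
        have h2 : (waveA ((n:ℤ)+2+3) (n+1) μ).im = 0 := by
          apply ImZero μ (n+1) (by omega)
          intro p q hpq hY
          omega
        have h3 : (waveA ((n:ℤ)+2+1) (n+1) μ).im = 0 := by
          apply ImZero μ (n+1) (by omega)
          intro p q hpq hY
          omega
        rw [h2, h3]
        push_cast
        ring
      · have h1 : (waveA (X-1) (n+1) μ).im = 0 := by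
          apply ImZero μ (n+1) (by omega)
          intro p q hpq hY
          rcases q with _|q'
          · exfalso; apply hX2; omega
          · rcases q' with _|q''
            · exfalso; apply hXn; omega
            · exfalso
              exact hex ⟨p+1, q'', by omega, by push_cast at hY ⊢; omega⟩
        have h2 : (waveA (X+3) (n+1) μ).im = 0 := by
          apply ImZero μ (n+1) (by omega)
          intro p q hpq hY
          rcases p with _|p'
          · rfl
          · exfalso
            exact hex ⟨p', q, by omega, by push_cast at hY ⊢; omega⟩
        have h3 : (waveA (X+1) (n+1) μ).im = 0 := by
          apply ImZero μ (n+1) (by omega)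
          intro p q hpq hY
          rcases q with _|q'
          · exfalso; apply hXn; omega
          · exfalso
            exact hex ⟨p, q', hpq, by push_cast at hY ⊢; omega⟩
        rw [h1, h2, h3]
        ring

end FeynCheck
end Stage7


theorem stmt16 (m ε : ℝ) (hm : 0 ≤ m) (hε : 0 < ε) (X T : ℤ) (hT : (0 : ℝ) < (T : ℝ) * ε) :
    (letI x : ℝ := (X : ℝ) * ε; letI t : ℝ := (T : ℝ) * ε;
      (x + ε) * ((x - ε) ^ 2 - t ^ 2) * a1 (x - 2 * ε) t m ε +
        (x - ε) * ((x + ε) ^ 2 - t ^ 2) * a1 (x + 2 * ε) t m ε =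
      2 * x * ((1 + 2 * m ^ 2 * ε ^ 2) * (x ^ 2 - ε ^ 2) - t ^ 2) * a1 x t m ε) ∧
    (letI x : ℝ := (X : ℝ) * ε; letI t : ℝ := (T : ℝ) * ε;
      (x + ε) * ((x - ε) ^ 2 - (t + ε) ^ 2) * a2 (x - 2 * ε) t m ε +
        (x - ε) * ((x + ε) ^ 2 - (t - ε) ^ 2) * a2 (x + 2 * ε) t m ε =
      2 * x * ((1 + 2 * m ^ 2 * ε ^ 2) * (x ^ 2 - ε ^ 2) - t ^ 2 + ε ^ 2) * a2 x t m ε) := by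
  have hT0 : (0:ℝ) < (T:ℝ) := by
    by_contra h
    push_neg at h
    have : (T:ℝ) * ε ≤ 0 := mul_nonpos_of_nonpos_of_nonneg h hε.le
    linarith
  have hT1 : (1:ℤ) ≤ T := by exact_mod_cast hT0
  set n : ℕ := T.toNat with hn
  have hTn : (T:ℤ) = (n:ℤ) := (Int.toNat_of_nonneg (by omega)).symm
  have hn1 : 1 ≤ n := by omega
  have key : ∀ Y : ℤ, wf ((Y:ℝ)*ε) ((T:ℝ)*ε + ε) m ε = waveA Y (n+1) (m*ε) := by
    intro Y
    rw [wf]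
    have hf1 : ((Y:ℝ)*ε)/ε = ((Y:ℤ):ℝ) := by
      rw [mul_div_assoc, div_self hε.ne', mul_one]
    have hf2 : ((T:ℝ)*ε + ε)/ε = ((T+1:ℤ):ℝ) := by
      rw [div_eq_iff hε.ne']
      push_cast
      ring
    rw [hf1, hf2, Int.floor_intCast, Int.floor_intCast,
      show (T+1).toNat = n+1 by omega]
  have hTr : (T:ℝ) = (n:ℝ) := by exact_mod_cast congrArg (Int.cast : ℤ → ℝ) hTn
  constructor
  · show ((X:ℝ)*ε + ε) * (((X:ℝ)*ε - ε) ^ 2 - ((T:ℝ)*ε) ^ 2) * a1 ((X:ℝ)*ε - 2 * ε) ((T:ℝ)*ε) m ε +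
        ((X:ℝ)*ε - ε) * (((X:ℝ)*ε + ε) ^ 2 - ((T:ℝ)*ε) ^ 2) * a1 ((X:ℝ)*ε + 2 * ε) ((T:ℝ)*ε) m ε =
      2 * ((X:ℝ)*ε) * ((1 + 2 * m ^ 2 * ε ^ 2) * (((X:ℝ)*ε) ^ 2 - ε ^ 2) - ((T:ℝ)*ε) ^ 2) *
        a1 ((X:ℝ)*ε) ((T:ℝ)*ε) m ε
    have g1 : a1 ((X:ℝ)*ε - 2*ε) ((T:ℝ)*ε) m ε = (waveA (X-2) (n+1) (m*ε)).re := by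
      rw [a1, show (X:ℝ)*ε - 2*ε = ((X-2:ℤ):ℝ)*ε by push_cast; ring, key (X-2)]
    have g2 : a1 ((X:ℝ)*ε + 2*ε) ((T:ℝ)*ε) m ε = (waveA (X+2) (n+1) (m*ε)).re := by
      rw [a1, show (X:ℝ)*ε + 2*ε = ((X+2:ℤ):ℝ)*ε by push_cast; ring, key (X+2)]
    have g3 : a1 ((X:ℝ)*ε) ((T:ℝ)*ε) m ε = (waveA X (n+1) (m*ε)).re := by
      rw [a1, key X]
    rw [g1, g2, g3, hTr]
    have h := FeynCheck.T1 (m*ε) n hn1 X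
    linear_combination (ε^3) * h
  · show ((X:ℝ)*ε + ε) * (((X:ℝ)*ε - ε) ^ 2 - ((T:ℝ)*ε + ε) ^ 2) * a2 ((X:ℝ)*ε - 2 * ε) ((T:ℝ)*ε) m ε +
        ((X:ℝ)*ε - ε) * (((X:ℝ)*ε + ε) ^ 2 - ((T:ℝ)*ε - ε) ^ 2) * a2 ((X:ℝ)*ε + 2 * ε) ((T:ℝ)*ε) m ε =
      2 * ((X:ℝ)*ε) * ((1 + 2 * m ^ 2 * ε ^ 2) * (((X:ℝ)*ε) ^ 2 - ε ^ 2) - ((T:ℝ)*ε) ^ 2 + ε ^ 2) *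
        a2 ((X:ℝ)*ε) ((T:ℝ)*ε) m ε
    have g4 : a2 ((X:ℝ)*ε - 2*ε) ((T:ℝ)*ε) m ε = (waveA (X-1) (n+1) (m*ε)).im := by
      rw [a2, show (X:ℝ)*ε - 2*ε + ε = ((X-1:ℤ):ℝ)*ε by push_cast; ring, key (X-1)]
    have g5 : a2 ((X:ℝ)*ε + 2*ε) ((T:ℝ)*ε) m ε = (waveA (X+3) (n+1) (m*ε)).im := by
      rw [a2, show (X:ℝ)*ε + 2*ε + ε = ((X+3:ℤ):ℝ)*ε by push_cast; ring, key (X+3)]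
    have g6 : a2 ((X:ℝ)*ε) ((T:ℝ)*ε) m ε = (waveA (X+1) (n+1) (m*ε)).im := by
      rw [a2, show (X:ℝ)*ε + ε = ((X+1:ℤ):ℝ)*ε by push_cast; ring, key (X+1)]
    rw [g4, g5, g6, hTr]
    have h := FeynCheck.T2 (m*ε) n hn1 X
    linear_combination (ε^3) * h
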